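/- Let (X,d) be a nonempty separable metric space and let r > 0. Then there exist a countable family of points (x_i)_{i∈I} in X with d(x_i, x_j) > r/2 for i ≠ j, and a family (Q_i)_{i∈I} of pairwise disjoint Borel subsets of X, such that the union of the Q_i is all of X and B(x_i, r/4) ⊆ Q_i ⊆ B(x_i, r) for every i ∈ I. -/

import Mathlib

open Metric

/-- Existence of an amalgam-block partition: a countable Borel partition `Q i`
with `(r/2)`-separated centers `x i` and `B(x i, r/4) ⊆ Q i ⊆ B(x i, r)`. -/
theorem stmt_3 {X : Type*} [MetricSpace X] [Nonempty X]
    [TopologicalSpace.SeparableSpace X] [MeasurableSpace X] [BorelSpace X]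
    (r : ℝ) (hr : 0 < r) :
    ∃ (I : Type) (_ : Countable I) (x : I → X) (Q : I → Set X),
      (∀ i j : I, i ≠ j → r / 2 < dist (x i) (x j)) ∧
      (∀ i, MeasurableSet (Q i)) ∧
      Pairwise (Function.onFun Disjoint Q) ∧
      (⋃ i, Q i) = Set.univ ∧
      ∀ i, Metric.ball (x i) (r / 4) ⊆ Q i ∧ Q i ⊆ Metric.ball (x i) r := by
  -- a maximal (r/2)-separated set
  obtain ⟨s, hs⟩ := zorn_subset {t : Set X | t.Pairwise fun a b => r / 2 < dist a b} (by
    intro c hc hchain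
    refine ⟨⋃₀ c, ?_, fun t ht => Set.subset_sUnion_of_mem ht⟩
    intro a ha b hb hab
    obtain ⟨ta, hta, hat⟩ := ha
    obtain ⟨tb, htb, hbt⟩ := hb
    rcases hchain.total hta htb with h | h
    · exact hc htb (h hat) hbt hab
    · exact hc hta hat (h hbt) hab)
  have hsep : s.Pairwise fun a b => r / 2 < dist a b := hs.prop
  -- maximality: every point is within r/2 of s
  have hcov : ∀ y : X, ∃ z ∈ s, dist y z ≤ r / 2 := by
    intro y
    by_contra h
    push_neg at h
    have hy : y ∉ s := fun hy => by have := h y hy; rw [dist_self] at this; linarith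
    have : insert y s ∈ {t : Set X | t.Pairwise fun a b => r / 2 < dist a b} := by
      haveI : Std.Symm (fun a b : X => r / 2 < dist a b) := ⟨fun a b hab => by rwa [dist_comm]⟩
      refine hsep.insert_of_symm ?_
      intro b hb _
      exact h b hb
    have := hs.eq_of_subset this (Set.subset_insert y s)
    exact hy (this ▸ Set.mem_insert y s)
  -- s is countable: the r/4-balls around points of s are disjoint open nonempty
  have hsc : s.Countable := by
    apply Set.PairwiseDisjoint.countable_of_isOpen
      (s := fun z => ball z (r / 4)) (a := s)
    · intro a ha b hb hab
      apply ball_disjoint_ball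
      calc r / 4 + r / 4 = r / 2 := by ring
        _ ≤ dist a b := (hsep ha hb hab).le
    · exact fun i _ => isOpen_ball
    · exact fun i _ => ⟨i, by simpa using by positivity⟩
  have : Countable s := hsc.to_subtype
  obtain ⟨e, he⟩ := countable_iff_exists_injective s |>.1 this
  set g : s ≃ Set.range e := Equiv.ofInjective e he with hg
  refine ⟨↥(Set.range e), inferInstance, fun n => ((g.symm n : s) : X), ?_⟩
  set x : ↥(Set.range e) → X := fun n => ((g.symm n : s) : X) with hx
  have hxinj : Function.Injective x :=
    Subtype.coe_injective.comp g.symm.injective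
  have hxmem : ∀ n, x n ∈ s := fun n => (g.symm n).2
  have hxsep : ∀ i j : ↥(Set.range e), i ≠ j → r / 2 < dist (x i) (x j) := fun i j hij =>
    hsep (hxmem i) (hxmem j) (fun h => hij (hxinj h))
  set Q : ↥(Set.range e) → Set X := fun i =>
    ball (x i) (r / 4) ∪
      (ball (x i) (3 * r / 4) \
        ((⋃ j, ball (x j) (r / 4)) ∪
          ⋃ j ∈ {j : ↥(Set.range e) | (j : ℕ) < (i : ℕ)}, ball (x j) (3 * r / 4)))
  refine ⟨Q, hxsep, ?_, ?_, ?_, ?_⟩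
  · intro i
    refine (measurableSet_ball).union (measurableSet_ball.diff (MeasurableSet.union ?_ ?_))
    · exact MeasurableSet.iUnion fun j => measurableSet_ball
    · exact MeasurableSet.biUnion (Set.to_countable _) fun j _ => measurableSet_ball
  · -- pairwise disjoint
    intro i j hij
    have hsmall : Disjoint (ball (x i) (r / 4)) (ball (x j) (r / 4)) := by
      apply ball_disjoint_ball
      calc r / 4 + r / 4 = r / 2 := by ring
        _ ≤ dist (x i) (x j) := (hxsep i j hij).le
    rw [Function.onFun]
    rw [Set.disjoint_left]
    rintro y (hy | hy) (hy' | hy')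
    · exact hsmall.le_bot ⟨hy, hy'⟩
    · exact hy'.2 (Or.inl (Set.mem_iUnion.2 ⟨i, hy⟩))
    · exact hy.2 (Or.inl (Set.mem_iUnion.2 ⟨j, hy'⟩))
    · have hne : (i : ℕ) ≠ (j : ℕ) := fun h => hij (Subtype.ext h)
      rcases hne.lt_or_gt with h | h
      · exact hy'.2 (Or.inr (Set.mem_biUnion h hy.1))
      · exact hy.2 (Or.inr (Set.mem_biUnion h hy'.1))
  · -- cover
    rw [Set.eq_univ_iff_forall]
    intro y
    rw [Set.mem_iUnion]
    by_cases hsm : ∃ j, y ∈ ball (x j) (r / 4)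
    · obtain ⟨j, hj⟩ := hsm
      exact ⟨j, Or.inl hj⟩
    · push_neg at hsm
      obtain ⟨z, hz, hdz⟩ := hcov y
      have hS : {n : ℕ | ∃ i : ↥(Set.range e), (i : ℕ) = n ∧
          y ∈ ball (x i) (3 * r / 4)}.Nonempty := by
        refine ⟨(g ⟨z, hz⟩ : ℕ), g ⟨z, hz⟩, rfl, ?_⟩
        have hxz : x (g ⟨z, hz⟩) = z := by
          simp [hx, Equiv.symm_apply_apply]
        rw [mem_ball, hxz]
        calc dist y z ≤ r / 2 := hdz
          _ < 3 * r / 4 := by linarith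
      obtain ⟨i, hei, hiball⟩ := Nat.sInf_mem hS
      refine ⟨i, Or.inr ⟨hiball, ?_⟩⟩
      rintro (h | h)
      · obtain ⟨j, hj⟩ := Set.mem_iUnion.1 h
        exact hsm j hj
      · simp only [Set.mem_iUnion] at h
        obtain ⟨j, hj, hjy⟩ := h
        have : (i : ℕ) ≤ (j : ℕ) := hei ▸ Nat.sInf_le ⟨j, rfl, hjy⟩
        exact absurd this (not_le.2 hj)
  · intro i
    constructor
    · exact Set.subset_union_left
    · rintro y (hy | hy)
      · exact ball_subset_ball (by linarith) hy
      · exact ball_subset_ball (by linarith) hy.1
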